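/- Let (φ, y, ρ, H) be a solution of the flat FLRW system on an interval I with ρ(t) ≥ 0 for all t ∈ I. Then for all t₀ ≤ t in I, the scalar field displacement satisfies the Cauchy–Schwarz bound (φ(t) − φ(t₀))² ≤ 2(t − t₀)(H(t₀) − H(t)). -/

import Mathlib

open Real Set Filter

/-- A solution of the flat FLRW system on the set `I`:
`φ' = y`, `y' = -3Hy - V'(φ) + α(φ)ρ`, `ρ' = -ρ(3γH + α(φ)y)`, `H' = -(1/2)(y² + γρ)`. -/
def IsFLRWSolution (γ : ℝ) (α V : ℝ → ℝ) (I : Set ℝ) (φ y ρ H : ℝ → ℝ) : Prop :=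
  ∀ t ∈ I,
    HasDerivWithinAt φ (y t) I t ∧
    HasDerivWithinAt y (-3 * H t * y t - deriv V (φ t) + α (φ t) * ρ t) I t ∧
    HasDerivWithinAt ρ (-(ρ t) * (3 * γ * H t + α (φ t) * y t)) I t ∧
    HasDerivWithinAt H (-(1/2) * (y t ^ 2 + γ * ρ t)) I t

/-- The Friedmann constraint `3H² = (1/2)y² + V(φ) + ρ` at time `t`. -/
def FriedmannConstraint (V : ℝ → ℝ) (φ y ρ H : ℝ → ℝ) (t : ℝ) : Prop :=
  3 * H t ^ 2 = (1/2) * y t ^ 2 + V (φ t) + ρ t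

open MeasureTheory Topology in
/-- Cauchy–Schwarz for interval integrals of continuous functions. -/
lemma flrw_aux_cs_integral {a b : ℝ} (hab : a ≤ b) {f : ℝ → ℝ}
    (hf : ContinuousOn f (Icc a b)) :
    (∫ u in a..b, f u) ^ 2 ≤ (b - a) * ∫ u in a..b, f u ^ 2 := by
  set μ := volume.restrict (Ioc a b) with hμ
  haveI : IsFiniteMeasure μ := ⟨by simp [hμ, Real.volume_Ioc]⟩
  obtain ⟨C, hC⟩ := (isCompact_Icc (a := a) (b := b)).exists_bound_of_continuousOn hf
  have hmeas : AEStronglyMeasurable f μ :=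
    (hf.mono Ioc_subset_Icc_self).aestronglyMeasurable measurableSet_Ioc
  have hbd : ∀ᵐ x ∂μ, ‖|f x|‖ ≤ C := by
    rw [hμ, ae_restrict_iff' measurableSet_Ioc]
    filter_upwards with x hx
    simpa using hC x (Ioc_subset_Icc_self hx)
  have hf2 : MemLp (fun x => |f x|) (ENNReal.ofReal 2) μ :=
    MemLp.of_bound hmeas.norm C hbd
  have hg2 : MemLp (fun _ : ℝ => (1 : ℝ)) (ENNReal.ofReal 2) μ := memLp_const 1
  have holder := integral_mul_le_Lp_mul_Lq_of_nonneg (μ := μ)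
    (Real.holderConjugate_iff_eq_conjExponent (by norm_num) |>.mpr (by norm_num) :
      Real.HolderConjugate 2 2)
    (Filter.Eventually.of_forall fun x => abs_nonneg (f x))
    (Filter.Eventually.of_forall fun _ => zero_le_one) hf2 hg2
  simp only [mul_one] at holder
  have hA : (∫ x, |f x| ^ (2:ℝ) ∂μ) = ∫ x, f x ^ 2 ∂μ := by
    congr 1; ext x
    rw [show (2:ℝ) = ((2:ℕ):ℝ) by norm_num, Real.rpow_natCast, sq_abs]
  have hB : (∫ x, (1:ℝ) ^ (2:ℝ) ∂μ) = b - a := by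
    simp [hμ, Real.volume_Ioc, ENNReal.toReal_ofReal (sub_nonneg.mpr hab), hab]
  rw [hA, hB] at holder
  have h1 : |∫ u in a..b, f u| ≤ ∫ x, |f x| ∂μ := by
    rw [intervalIntegral.integral_of_le hab]
    simpa [Real.norm_eq_abs] using norm_integral_le_integral_norm (f := f) (μ := μ)
  have hAnn : (0:ℝ) ≤ ∫ x, f x ^ 2 ∂μ := integral_nonneg fun x => sq_nonneg _
  have h2 : (∫ u in a..b, f u) ^ 2 ≤
      ((∫ x, f x ^ 2 ∂μ) ^ ((1:ℝ)/2) * (b - a) ^ ((1:ℝ)/2)) ^ 2 := by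
    rw [← sq_abs (∫ u in a..b, f u)]
    exact pow_le_pow_left₀ (abs_nonneg _) (h1.trans holder) 2
  calc (∫ u in a..b, f u) ^ 2
      ≤ ((∫ x, f x ^ 2 ∂μ) ^ ((1:ℝ)/2) * (b - a) ^ ((1:ℝ)/2)) ^ 2 := h2
    _ = (∫ x, f x ^ 2 ∂μ) * (b - a) := by
        rw [mul_pow, ← Real.rpow_natCast ((∫ x, f x ^ 2 ∂μ) ^ ((1:ℝ)/2)) 2,
          ← Real.rpow_natCast ((b - a) ^ ((1:ℝ)/2)) 2,
          ← Real.rpow_mul hAnn, ← Real.rpow_mul (sub_nonneg.mpr hab)]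
        norm_num
    _ = (b - a) * ∫ u in a..b, f u ^ 2 := by
        rw [intervalIntegral.integral_of_le hab, mul_comm]

/-- the Cauchy–Schwarz bound
`(φ(t) - φ(t₀))² ≤ 2(t - t₀)(H(t₀) - H(t))` for `t₀ ≤ t` in `I`, when `ρ ≥ 0` on `I`. -/
theorem flrw_cauchy_schwarz_bound
    (γ : ℝ) (hγ : 0 < γ) (α V : ℝ → ℝ) (hα : Continuous α) (hV : ContDiff ℝ 2 V)
    (I : Set ℝ) (hI : Convex ℝ I) (φ y ρ H : ℝ → ℝ)
    (hsol : IsFLRWSolution γ α V I φ y ρ H)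
    (hρ : ∀ t ∈ I, 0 ≤ ρ t) :
    ∀ t₀ ∈ I, ∀ t ∈ I, t₀ ≤ t →
      (φ t - φ t₀) ^ 2 ≤ 2 * (t - t₀) * (H t₀ - H t) := by
  intro t₀ ht₀ t ht hle
  have hsub : Icc t₀ t ⊆ I := hI.ordConnected.out ht₀ ht
  have hyc : ContinuousOn y I := fun s hs => ((hsol s hs).2.1).continuousWithinAt
  have hHc : ContinuousOn H I := fun s hs => ((hsol s hs).2.2.2).continuousWithinAt
  have hφc : ContinuousOn φ I := fun s hs => ((hsol s hs).1).continuousWithinAt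
  have hρc : ContinuousOn ρ I := fun s hs => ((hsol s hs).2.2.1).continuousWithinAt
  have hnb : ∀ x ∈ Ioo t₀ t, I ∈ nhds x := fun x hx =>
    mem_nhds_iff.mpr ⟨Ioo t₀ t, fun z hz => hsub (Ioo_subset_Icc_self hz), isOpen_Ioo, hx⟩
  have hyI : IntervalIntegrable y MeasureTheory.volume t₀ t := by
    apply ContinuousOn.intervalIntegrable; rw [uIcc_of_le hle]; exact hyc.mono hsub
  have hy2I : IntervalIntegrable (fun u => y u ^ 2) MeasureTheory.volume t₀ t := by
    apply ContinuousOn.intervalIntegrable; rw [uIcc_of_le hle]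
    exact ((hyc.mono hsub).pow 2)
  have hgI : IntervalIntegrable (fun u => (1/2 : ℝ) * (y u ^ 2 + γ * ρ u))
      MeasureTheory.volume t₀ t := by
    apply ContinuousOn.intervalIntegrable; rw [uIcc_of_le hle]
    exact (continuousOn_const.mul (((hyc.mono hsub).pow 2).add
      (continuousOn_const.mul (hρc.mono hsub))))
  have hφeq : ∫ u in t₀..t, y u = φ t - φ t₀ := by
    apply intervalIntegral.integral_eq_sub_of_hasDeriv_right_of_le hle (hφc.mono hsub) _ hyI
    intro x hx
    exact (((hsol x (hsub (Ioo_subset_Icc_self hx))).1).hasDerivAt (hnb x hx)).hasDerivWithinAt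
  have hHeq : ∫ u in t₀..t, -((1/2 : ℝ) * (y u ^ 2 + γ * ρ u)) = H t - H t₀ := by
    apply intervalIntegral.integral_eq_sub_of_hasDeriv_right_of_le hle (hHc.mono hsub) _ hgI.neg
    intro x hx
    have := (((hsol x (hsub (Ioo_subset_Icc_self hx))).2.2.2).hasDerivAt
      (hnb x hx)).hasDerivWithinAt (s := Ioi x)
    convert this using 1; simp only [Pi.neg_apply]; ring
  have hHint : ∫ u in t₀..t, (1/2 : ℝ) * (y u ^ 2 + γ * ρ u) = H t₀ - H t := by
    have := hHeq
    rw [intervalIntegral.integral_neg] at this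
    linarith
  have hmono : ∫ u in t₀..t, (1/2 : ℝ) * y u ^ 2
      ≤ ∫ u in t₀..t, (1/2 : ℝ) * (y u ^ 2 + γ * ρ u) := by
    apply intervalIntegral.integral_mono_on hle (hy2I.const_mul _) hgI
    intro x hx
    have hρx : 0 ≤ ρ x := hρ x (hsub hx)
    nlinarith
  have hhalf : ∫ u in t₀..t, (1/2 : ℝ) * y u ^ 2 = (1/2 : ℝ) * ∫ u in t₀..t, y u ^ 2 := by
    rw [intervalIntegral.integral_const_mul]
  have hy2le : ∫ u in t₀..t, y u ^ 2 ≤ 2 * (H t₀ - H t) := by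
    rw [hhalf, hHint] at hmono; linarith
  have hcs := flrw_aux_cs_integral hle (hyc.mono hsub)
  rw [hφeq] at hcs
  calc (φ t - φ t₀) ^ 2 ≤ (t - t₀) * ∫ u in t₀..t, y u ^ 2 := hcs
    _ ≤ (t - t₀) * (2 * (H t₀ - H t)) :=
        mul_le_mul_of_nonneg_left hy2le (sub_nonneg.mpr hle)
    _ = 2 * (t - t₀) * (H t₀ - H t) := by ring
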